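/- arXiv:2009.00755 — 3 statements merged into one kernel-verified Lean document; each statement's English description precedes it below -/
import Mathlib

section
/- Let T be a Turning Machine of length n whose initial configuration has pos(m_i)=(i,0) for all i and nonnegative initial states, and let c be any reachable configuration of T. Then for every 1 ≤ k ≤ n−2 there is a unique integer t_k with −2 ≤ t_k ≤ 2 such that d_k = ρ^{t_k}(d_{k−1}) in c (where d_k is the direction of m_k), and for all 0 ≤ i < j ≤ n−2 one has Δs(m_j) − Δs(m_i) = Σ_{k=i+1}^{j} t_k (the integers t_k are the turn angles in units of π/3). -/
namespace TuringMachineFolding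

/-- Points of the triangular grid, coordinatised by `ℤ × ℤ`. -/
abbrev Pt : Type := ℤ × ℤ

/-- The six triangular-grid unit vectors `x, y, w, -x, -y, -w`. -/
def unitVecs : Set Pt :=
  {((1 : ℤ), (0 : ℤ)), (0, 1), (-1, 1), (-1, 0), (0, -1), (1, -1)}

/-- Anticlockwise rotation by `π/3`: the linear map with `ρ(1,0) = (0,1)`, `ρ(0,1) = (-1,1)`. -/
def rot : Pt → Pt := fun p => (-p.2, p.1 + p.2)

/-- Clockwise rotation by `π/3`, the inverse of `rot`. -/
def rotInv : Pt → Pt := fun p => (p.1 + p.2, -p.1)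

/-- `rot` as a permutation of the grid, so that integer powers `rotE ^ t` make sense. -/
def rotE : Equiv.Perm Pt where
  toFun := rot
  invFun := rotInv
  left_inv := by
    rintro ⟨a, b⟩
    simp only [rot, rotInv, Prod.mk.injEq]
    constructor <;> ring
  right_inv := by
    rintro ⟨a, b⟩
    simp only [rot, rotInv, Prod.mk.injEq]
    constructor <;> ring

/-- Scalar multiple of a grid vector. -/
def zsmulPt (m : ℤ) (p : Pt) : Pt := (m * p.1, m * p.2)

/-- A configuration of a Turning Machine of length `n`: states and positions of the monomers
`m_0, …, m_{n-1}` (indices `≥ n` carry irrelevant junk values), such that `pos m_0 = (0,0)`,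
consecutive positions differ by one of the six unit vectors, and positions are pairwise
distinct. -/
structure Config (n : ℕ) where
  st : ℕ → ℤ
  pos : ℕ → Pt
  pos_zero : pos 0 = (0, 0)
  step_unit : ∀ i, i + 1 < n → pos (i + 1) - pos i ∈ unitVecs
  pos_inj : ∀ i < n, ∀ j < n, pos i = pos j → i = j

/-- The direction of monomer `m_i` (meaningful for `i + 1 < n`). -/
def dir {n : ℕ} (c : Config n) (i : ℕ) : Pt := c.pos (i + 1) - c.pos i

/-- The translation vector applied to the head of `m_i` when the turning rule fires at `m_i`:
`ρ²(d_i)` for a positive state, `ρ⁻²(d_i)` for a negative state. -/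
def delta {n : ℕ} (c : Config n) (i : ℕ) : Pt :=
  if 0 < c.st i then rot (rot (dir c i)) else rotInv (rotInv (dir c i))

/-- The state sequence after applying the turning rule at monomer `i`. -/
def nextSt {n : ℕ} (c : Config n) (i : ℕ) : ℕ → ℤ := fun j =>
  if j = i then (if 0 < c.st i then c.st i - 1 else c.st i + 1) else c.st j

/-- The position sequence after applying the turning rule at monomer `i`. -/
def nextPos {n : ℕ} (c : Config n) (i : ℕ) : ℕ → Pt := fun j =>
  if i < j then c.pos j + delta c i else c.pos j

/-- The turning rule applied at monomer `i` transforms `c` into `c'`.  The requirement that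
`c'` is again a `Config` (pairwise distinct positions) encodes that the move is not blocked. -/
def StepAt {n : ℕ} (c : Config n) (i : ℕ) (c' : Config n) : Prop :=
  i < n ∧ c.st i ≠ 0 ∧ (∀ j < n, c'.st j = nextSt c i j) ∧ (∀ j < n, c'.pos j = nextPos c i j)

/-- The turning rule is applicable to monomer `i` in configuration `c`. -/
def Applicable {n : ℕ} (c : Config n) (i : ℕ) : Prop := ∃ c', StepAt c i c'

/-- Monomer `i` is blocked in `c`: nonzero state, but no applicable rule. -/
def Blocked {n : ℕ} (c : Config n) (i : ℕ) : Prop :=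
  i < n ∧ c.st i ≠ 0 ∧ ¬ Applicable c i

/-- One asynchronous step of the machine. -/
def Step {n : ℕ} (c c' : Config n) : Prop := ∃ i, StepAt c i c'

/-- `c` is reachable from `c₀` by a finite sequence of rule applications. -/
def Reachable {n : ℕ} (c₀ c : Config n) : Prop := Relation.ReflTransGen Step c₀ c

/-- No rule is applicable in `c`. -/
def Terminal {n : ℕ} (c : Config n) : Prop := ∀ i, ¬ Applicable c i

/-- `c` is permanently blocked: some state is nonzero but no monomer admits an applicable rule. -/
def PermBlocked {n : ℕ} (c : Config n) : Prop :=
  (∃ i < n, c.st i ≠ 0) ∧ Terminal c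

/-- The Turning Machine with initial configuration `c₀` computes the target configuration `ct`:
every maximal sequence of rule applications from `c₀` is finite and ends in `ct`
(configurations are compared on the meaningful indices `< n`). -/
def Computes {n : ℕ} (c₀ ct : Config n) : Prop :=
  (¬ ∃ f : ℕ → Config n, f 0 = c₀ ∧ ∀ k, Step (f k) (f (k + 1))) ∧
  ∀ c, Reachable c₀ c → Terminal c → ∀ i < n, c.st i = ct.st i ∧ c.pos i = ct.pos i

/-- The initial configuration with monomers on the x-axis, `pos m_i = (i,0)`, and
initial states `s₀`. -/
def mkInit (n : ℕ) (s₀ : ℕ → ℤ) : Config n where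
  st := s₀
  pos := fun i => ((i : ℤ), 0)
  pos_zero := by simp
  step_unit := by
    intro i _
    have h : (((i + 1 : ℕ) : ℤ), (0 : ℤ)) - (((i : ℕ) : ℤ), (0 : ℤ)) = ((1 : ℤ), (0 : ℤ)) := by
      simp only [Prod.mk_sub_mk, Prod.mk.injEq]
      constructor <;> push_cast <;> ring
    rw [h]
    simp [unitVecs]
  pos_inj := by
    intro i _ j _ h
    have h1 : ((i : ℕ) : ℤ) = ((j : ℕ) : ℤ) := congrArg Prod.fst h
    exact_mod_cast h1

/-- The initial configuration of the line-rotating Turning Machine `L^σ_n`: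
`pos m_i = (i,0)`, states `σ` except the last monomer which has state `0`. -/
def lineInit (n : ℕ) (σ : ℤ) : Config n :=
  mkInit n (fun i => if i + 1 = n then 0 else σ)

/-- `Δs`: the number of rule applications made to monomer `i` on the way from `c₀` to `c`
(each application changes the state by one, towards `0`). -/
def dS {n : ℕ} (c₀ c : Config n) (i : ℕ) : ℤ := |c₀.st i - c.st i|

/-- The set of positions occupied by a configuration. -/
def posSet {n : ℕ} (c : Config n) : Set Pt := {q | ∃ i < n, c.pos i = q}


/-- Adjacency on the triangular grid. -/
def Adj (p q : Pt) : Prop := q - p ∈ unitVecs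

/-- The graph induced by the edge relation `E` on the set `S` is connected. -/
def ConnectedIn (E : Pt → Pt → Prop) (S : Set Pt) : Prop :=
  ∀ p ∈ S, ∀ q ∈ S, Relation.ReflTransGen (fun a b => a ∈ S ∧ b ∈ S ∧ E a b) p q

/-- A shape: a finite subset of the grid whose induced graph is connected. -/
def IsShape (S : Set Pt) : Prop := S.Finite ∧ ConnectedIn Adj S

/-- `y`-monotone shape: the points of each row form a set of consecutive integers. -/
def YMonotone (S : Set Pt) : Prop :=
  ∀ j x₁ x₂ x₃ : ℤ, x₁ ≤ x₂ → x₂ ≤ x₃ → (x₁, j) ∈ S → (x₃, j) ∈ S → (x₂, j) ∈ S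

/-- Adjacency along the `x` and `y` axes only. -/
def AdjXY (p q : Pt) : Prop :=
  q - p ∈ ({((1 : ℤ), (0 : ℤ)), (-1, 0), (0, 1), (0, -1)} : Set Pt)

/-- `xy`-connected: connected using only `±x` and `±y` edges. -/
def XYConnected (S : Set Pt) : Prop := ConnectedIn AdjXY S

/-- The perimeter of a shape: its points having a neighbour outside the shape. -/
def perimeter (S : Set Pt) : Set Pt := {p ∈ S | ∃ v ∈ unitVecs, p + v ∉ S}

/-- Translation of a set of points. -/
def translate (t : Pt) (S : Set Pt) : Set Pt := (fun p => p + t) '' S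

/-- The cardinality of the symmetric difference of two sets of points. -/
noncomputable def symmDiffCard (A B : Set Pt) : ℕ := ((A \ B) ∪ (B \ A)).ncard

/-- Error of a configuration w.r.t. a shape: the least cardinality, over all translations `t`,
of the symmetric difference of `S + t` and the set of monomer positions. -/
noncomputable def foldError {n : ℕ} (S : Set Pt) (c : Config n) : ℕ :=
  sInf {m | ∃ t : Pt, symmDiffCard (translate t S) (posSet c) = m}

/-- The allowed steps of a `yw`-chain. -/
def ywSteps : Set Pt := {((0 : ℤ), (1 : ℤ)), (-1, 1)}

/-- `c 0, …, c (k-1)` is a `yw`-separator of the `y`-monotone shape `S`: a `yw`-chain inside `S`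
from the bottommost row of `S` to the topmost row of `S`. -/
def IsYWSep (S : Set Pt) (k : ℕ) (c : ℕ → Pt) : Prop :=
  0 < k ∧ (∀ ℓ, ℓ + 1 < k → c (ℓ + 1) - c ℓ ∈ ywSteps) ∧ (∀ ℓ < k, c ℓ ∈ S) ∧
    (∀ p ∈ S, (c 0).2 ≤ p.2) ∧ (∀ p ∈ S, p.2 ≤ (c (k - 1)).2)

/-- The shape `S` scaled by a factor `2`. -/
def scale2 (S : Set Pt) : Set Pt :=
  {q | ∃ p ∈ S, ∃ a b : ℤ, (a = 0 ∨ a = 1) ∧ (b = 0 ∨ b = 1) ∧ q = (2 * p.1 + a, 2 * p.2 + b)}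

/-- The right boundary of a shape: the rightmost point of each nonempty row. -/
def rightBdry (S : Set Pt) : Set Pt := {p ∈ S | ∀ q ∈ S, q.2 = p.2 → q.1 ≤ p.1}

/-- The left boundary of a shape: the leftmost point of each nonempty row. -/
def leftBdry (S : Set Pt) : Set Pt := {p ∈ S | ∀ q ∈ S, q.2 = p.2 → p.1 ≤ q.1}

/-- The "almost rectangle" `R_{k'}` from the definition of the `1`-gap spiral. -/
def spiralRing (k : ℤ) : Set Pt :=
  (({p : Pt | (p.2 = 2 * k ∨ p.2 = -(2 * k)) ∧ -(2 * k) ≤ p.1 ∧ p.1 ≤ 2 * k - 1} ∪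
      {p : Pt | (p.1 = -(2 * k) ∨ p.1 = 2 * k - 1) ∧ -(2 * k) ≤ p.2 ∧ p.2 ≤ 2 * k}) ∪
      {(2 * k - 2, -(2 * k) + 2), (2 * k, -(2 * k)), (2 * k + 1, -(2 * k))}) \
    {(2 * k - 1, -(2 * k) + 1)}

/-- The `k`-turn `1`-gap spiral `S_k`. -/
def spiral (k : ℕ) : Set Pt := ⋃ j ∈ Finset.Icc 1 k, spiralRing (j : ℤ)

/-- The base turning numbers `t_i` of the inside-to-outside sequence. -/
def tIn (t0 : ℤ) : ℕ → ℤ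
  | 0 => t0
  | i + 1 => tIn t0 i + (if (i + 1) % 2 = 0 then 2 else 1)

/-- The inside-to-outside turning number sequence
`T_in(t₀) = [t₀]¹,[t₁]²,…,[t_{4k}]^{4k+1}, t_{4k}`. -/
def TInList (k : ℕ) (t0 : ℤ) : List ℤ :=
  ((List.range (4 * k + 1)).flatMap fun i => List.replicate (i + 1) (tIn t0 i)) ++ [tIn t0 (4 * k)]

/-- The base turning numbers `t_i` of the outside-to-inside sequence. -/
def tOut (t0 : ℤ) : ℕ → ℤ
  | 0 => t0
  | i + 1 => tOut t0 i - (if (i + 1) % 2 = 0 then 1 else 2)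

/-- The outside-to-inside turning number sequence
`T_out(t₀) = t₀,[t₀]^{4k+1},[t₁]^{4k},…,[t_{4k}]¹`. -/
def TOutList (k : ℕ) (t0 : ℤ) : List ℤ :=
  t0 :: ((List.range (4 * k + 1)).flatMap fun i => List.replicate (4 * k + 1 - i) (tOut t0 i))

/-- The cross shape with arm length `a`. -/
def cross (a : ℤ) : Set Pt :=
  {p : Pt | p.2 = 0 ∧ -a ≤ p.1 ∧ p.1 ≤ a} ∪ {p : Pt | p.1 = 0 ∧ -a ≤ p.2 ∧ p.2 ≤ a}

/-- A positive zig-zag path: pairwise distinct points with steps in `{x, -x, y, w}`. -/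
def PosZigZag (n : ℕ) (p : ℕ → Pt) : Prop :=
  (∀ i < n, ∀ j < n, p i = p j → i = j) ∧
    ∀ i, i + 1 < n → p (i + 1) - p i ∈ ({((1 : ℤ), (0 : ℤ)), (-1, 0), (0, 1), (-1, 1)} : Set Pt)

/-- A negative zig-zag path: pairwise distinct points with steps in `{x, -x, -y, -w}`. -/
def NegZigZag (n : ℕ) (p : ℕ → Pt) : Prop :=
  (∀ i < n, ∀ j < n, p i = p j → i = j) ∧
    ∀ i, i + 1 < n → p (i + 1) - p i ∈ ({((1 : ℤ), (0 : ℤ)), (-1, 0), (0, -1), (1, -1)} : Set Pt)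



-- Auxiliary lemmas for `turn_angle_state_relation`

lemma rotE_apply' (p : Pt) : rotE p = (-p.2, p.1 + p.2) := rfl

lemma rot6_nat' : rotE ^ (6:ℕ) = 1 := by
  ext p <;> simp [pow_succ, Equiv.Perm.mul_apply, rotE_apply'] <;> ring

lemma rot6_one' : rotE ^ (6:ℤ) = 1 := by
  rw [show (6:ℤ) = ((6:ℕ):ℤ) by norm_num, zpow_natCast, rot6_nat']

lemma rot_zpow_mod' (t : ℤ) : rotE ^ t = rotE ^ (t % 6) := by
  conv_lhs => rw [show t = 6 * (t / 6) + t % 6 from (Int.mul_ediv_add_emod t 6).symm]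
  rw [zpow_add, zpow_mul, rot6_one', one_zpow, one_mul]

lemma rot3_neg' (p : Pt) : (rotE ^ (3:ℤ)) p = -p := by
  rw [show (3:ℤ) = ((3:ℕ):ℤ) by norm_num, zpow_natCast]
  rcases p with ⟨a, b⟩
  simp only [pow_succ, pow_zero, one_mul, Equiv.Perm.mul_apply, rotE_apply', Prod.ext_iff,
    Prod.fst_neg, Prod.snd_neg]
  constructor <;> ring

lemma rot_fix' (d : ℤ) (h : (rotE ^ d) ((1:ℤ),(0:ℤ)) = ((1:ℤ),(0:ℤ))) : (6:ℤ) ∣ d := by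
  rw [rot_zpow_mod'] at h
  have h0 : 0 ≤ d % 6 := Int.emod_nonneg d (by norm_num)
  have h6 : d % 6 < 6 := Int.emod_lt_of_pos d (by norm_num)
  interval_cases h' : d % 6
  · omega
  · rw [show (1:ℤ) = ((1:ℕ):ℤ) by norm_num, zpow_natCast] at h
    simp [pow_succ, Equiv.Perm.mul_apply, rotE_apply', Prod.ext_iff] at h
  · rw [show (2:ℤ) = ((2:ℕ):ℤ) by norm_num, zpow_natCast] at h
    simp [pow_succ, Equiv.Perm.mul_apply, rotE_apply', Prod.ext_iff] at h
  · rw [show (3:ℤ) = ((3:ℕ):ℤ) by norm_num, zpow_natCast] at h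
    simp [pow_succ, Equiv.Perm.mul_apply, rotE_apply', Prod.ext_iff] at h
  · rw [show (4:ℤ) = ((4:ℕ):ℤ) by norm_num, zpow_natCast] at h
    simp [pow_succ, Equiv.Perm.mul_apply, rotE_apply', Prod.ext_iff] at h
  · rw [show (5:ℤ) = ((5:ℕ):ℤ) by norm_num, zpow_natCast] at h
    simp [pow_succ, Equiv.Perm.mul_apply, rotE_apply', Prod.ext_iff] at h

/-- From equal images of `(1,0)` under powers, the exponents agree mod 6. -/
lemma rot_pow_eq_iff' {a b : ℤ} (h : (rotE ^ a) ((1:ℤ),(0:ℤ)) = (rotE ^ b) ((1:ℤ),(0:ℤ))) :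
    (6:ℤ) ∣ a - b := by
  apply rot_fix'
  have : (rotE ^ (-b)) ((rotE ^ a) ((1:ℤ),(0:ℤ))) = (rotE ^ (-b)) ((rotE ^ b) ((1:ℤ),(0:ℤ))) := by
    rw [h]
  rwa [← Equiv.Perm.mul_apply, ← Equiv.Perm.mul_apply, ← zpow_add, ← zpow_add,
    show -b + a = a - b by ring, show -b + b = (0:ℤ) by ring, zpow_zero,
    Equiv.Perm.one_apply] at this

lemma add_rot2' (d : Pt) : d + rot (rot d) = rot d := by
  rcases d with ⟨a, b⟩
  simp only [rot, Prod.mk_add_mk, Prod.mk.injEq]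
  constructor <;> ring

lemma neg_dir_contra' {n : ℕ} (c : Config n) (k : ℕ) (h1 : 1 ≤ k) (hk : k + 1 < n)
    (h : dir c k = - dir c (k - 1)) : False := by
  have e2 : dir c (k - 1) = c.pos k - c.pos (k - 1) := by
    unfold dir; congr 2; omega
  rw [e2] at h
  have hp : c.pos (k + 1) = c.pos (k - 1) := by
    have h' : c.pos (k + 1) - c.pos k = c.pos (k - 1) - c.pos k := by
      rw [show c.pos (k-1) - c.pos k = -(c.pos k - c.pos (k-1)) by abel]; exact h
    exact sub_left_inj.mp h'
  have := c.pos_inj (k + 1) hk (k - 1) (by omega) hp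
  omega

lemma step_dir' {n : ℕ} {b c' : Config n} {i : ℕ} (h : StepAt b i c')
    (hin : ∀ m, m + 1 < n → 0 ≤ b.st m) :
    ∀ k, k + 1 < n → dir c' k = if k = i then rot (dir b k) else dir b k := by
  obtain ⟨hi, hne, hst, hpos⟩ := h
  intro k hk
  have p1 : c'.pos (k + 1) = nextPos b i (k + 1) := hpos _ hk
  have p0 : c'.pos k = nextPos b i k := hpos _ (by omega)
  unfold dir
  rw [p1, p0]; unfold nextPos
  rcases lt_trichotomy k i with hki | hki | hki
  · rw [if_neg (by omega : ¬ i < k + 1), if_neg (by omega : ¬ i < k),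
      if_neg (by omega : ¬ k = i)]
  · subst hki
    rw [if_pos (by omega : k < k + 1), if_neg (by omega : ¬ k < k), if_pos rfl]
    have hpos' : 0 < b.st k := lt_of_le_of_ne (hin k hk) (Ne.symm hne)
    rw [delta, if_pos hpos']
    have e : b.pos (k + 1) + rot (rot (dir b k)) - b.pos k
        = dir b k + rot (rot (dir b k)) := by unfold dir; abel
    rw [e, add_rot2']
    rfl
  · rw [if_pos (by omega : i < k + 1), if_pos hki, if_neg (by omega : ¬ k = i)]
    abel

/-- The central invariant along reachable configurations. -/
lemma inv_reachable' (n : ℕ) (s₀ : ℕ → ℤ) (hs : ∀ i < n, 0 ≤ s₀ i)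
    (c : Config n) (hc : Reachable (mkInit n s₀) c) :
    (∀ k, k + 1 < n → 0 ≤ c.st k ∧ c.st k ≤ s₀ k ∧
      dir c k = (rotE ^ (s₀ k - c.st k)) ((1:ℤ),(0:ℤ))) ∧
    (∀ k, 1 ≤ k → k + 1 < n →
      -2 ≤ (s₀ k - c.st k) - (s₀ (k-1) - c.st (k-1)) ∧
      (s₀ k - c.st k) - (s₀ (k-1) - c.st (k-1)) ≤ 2) := by
  induction hc with
  | refl =>
    constructor
    · intro k hk
      refine ⟨hs k (by omega), le_refl _, ?_⟩
      have : s₀ k - (mkInit n s₀).st k = 0 := by simp [mkInit]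
      rw [this, zpow_zero, Equiv.Perm.one_apply]
      simp only [dir, mkInit, Prod.mk_sub_mk, Prod.mk.injEq]
      constructor
      · push_cast; ring
      · ring
    · intro k _ _
      norm_num [mkInit]
  | @tail b c' hsteps hstep ih =>
    obtain ⟨i, histep⟩ := hstep
    have hin : ∀ m, m + 1 < n → 0 ≤ b.st m := fun m hm => (ih.1 m hm).1
    have hdir := step_dir' histep hin
    obtain ⟨hi, hne, hst, hpos⟩ := histep
    have hst' : ∀ k, k + 1 < n →
        c'.st k = if k = i then b.st i - 1 else b.st k := by
      intro k hk
      rw [hst k (by omega)]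
      unfold nextSt
      by_cases hki : k = i
      · subst hki
        rw [if_pos rfl, if_pos rfl, if_pos (lt_of_le_of_ne (hin k hk) (Ne.symm hne))]
      · rw [if_neg hki, if_neg hki]
    have part1 : ∀ k, k + 1 < n → 0 ≤ c'.st k ∧ c'.st k ≤ s₀ k ∧
        dir c' k = (rotE ^ (s₀ k - c'.st k)) ((1:ℤ),(0:ℤ)) := by
      intro k hk
      obtain ⟨ih0, ih1, ih2⟩ := ih.1 k hk
      rw [hst' k hk, hdir k hk]
      by_cases hki : k = i
      · subst hki
        have hpos' : 0 < b.st k := lt_of_le_of_ne (hin k hk) (Ne.symm hne)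
        rw [if_pos rfl, if_pos rfl]
        refine ⟨by omega, by omega, ?_⟩
        rw [show s₀ k - (b.st k - 1) = 1 + (s₀ k - b.st k) by ring, zpow_add, zpow_one,
          Equiv.Perm.mul_apply, ← ih2]
        rfl
      · rw [if_neg hki, if_neg hki]
        exact ⟨ih0, ih1, ih2⟩
    refine ⟨part1, ?_⟩
    intro k hk1 hk
    have hkm : (k - 1) + 1 < n := by omega
    set D := (s₀ k - c'.st k) - (s₀ (k-1) - c'.st (k-1)) with hD
    have hold := ih.2 k hk1 hk
    have hrange : -3 ≤ D ∧ D ≤ 3 := by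
      rw [hD, hst' k hk, hst' (k-1) hkm]
      rcases eq_or_ne k i with h1 | h1
      · subst h1
        rw [if_pos rfl, if_neg (by omega)]
        omega
      · rcases eq_or_ne (k-1) i with h2 | h2
        · rw [if_neg h1, if_pos h2, ← h2]
          omega
        · rw [if_neg h1, if_neg h2]
          omega
    have hnot3 : D ≠ 3 ∧ D ≠ -3 := by
      have heq : dir c' k = (rotE ^ D) (dir c' (k-1)) := by
        rw [(part1 k hk).2.2, (part1 (k-1) hkm).2.2,
          show s₀ k - c'.st k = D + (s₀ (k-1) - c'.st (k-1)) by rw [hD]; ring,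
          zpow_add, Equiv.Perm.mul_apply]
      constructor
      · intro h3
        rw [h3, rot3_neg'] at heq
        exact neg_dir_contra' c' k hk1 hk heq
      · intro h3
        rw [h3, rot_zpow_mod', show (-3:ℤ) % 6 = 3 by norm_num, rot3_neg'] at heq
        exact neg_dir_contra' c' k hk1 hk heq
    omega

lemma telescope' (Δ : ℕ → ℤ) : ∀ i j : ℕ, i < j →
    ∑ k ∈ Finset.Icc (i+1) j, (Δ k - Δ (k-1)) = Δ j - Δ i := by
  intro i j
  induction j with
  | zero => omega
  | succ j ihj =>
    intro hij
    rcases Nat.lt_or_ge i j with h | h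
    · rw [Finset.sum_Icc_succ_top (by omega : i + 1 ≤ j + 1), ihj h]
      simp only [Nat.add_sub_cancel]
      ring
    · have : i = j := by omega
      subst this
      rw [Finset.Icc_self, Finset.sum_singleton]
      simp only [Nat.add_sub_cancel]


/-- For a Turning Machine with initial positions `(i,0)` and nonnegative
initial states, in any reachable configuration each `d_k` (`1 ≤ k ≤ n-2`) is obtained from
`d_{k-1}` by a unique rotation `ρ^{t_k}` with `-2 ≤ t_k ≤ 2`, and these turn angles satisfy
`Δs(m_j) - Δs(m_i) = ∑_{k=i+1}^{j} t_k`. -/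
theorem turn_angle_state_relation (n : ℕ) (s₀ : ℕ → ℤ) (hs : ∀ i < n, 0 ≤ s₀ i)
    (c : Config n) (hc : Reachable (mkInit n s₀) c) :
    (∀ k, 1 ≤ k → k + 1 < n →
      ∃! t : ℤ, -2 ≤ t ∧ t ≤ 2 ∧ dir c k = (rotE ^ t) (dir c (k - 1))) ∧
    ∀ t : ℕ → ℤ,
      (∀ k, 1 ≤ k → k + 1 < n →
        -2 ≤ t k ∧ t k ≤ 2 ∧ dir c k = (rotE ^ t k) (dir c (k - 1))) →
      ∀ i j, i < j → j + 1 < n →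
        dS (mkInit n s₀) c j - dS (mkInit n s₀) c i = ∑ k ∈ Finset.Icc (i + 1) j, t k := by
  obtain ⟨h1, h2⟩ := inv_reachable' n s₀ hs c hc
  set Δ : ℕ → ℤ := fun k => s₀ k - c.st k with hΔ
  have key : ∀ k, 1 ≤ k → k + 1 < n →
      -2 ≤ Δ k - Δ (k-1) ∧ Δ k - Δ (k-1) ≤ 2 ∧
        dir c k = (rotE ^ (Δ k - Δ (k-1))) (dir c (k-1)) := by
    intro k hk1 hk
    have hkm : (k-1)+1 < n := by omega
    obtain ⟨hb1, hb2⟩ := h2 k hk1 hk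
    refine ⟨hb1, hb2, ?_⟩
    rw [(h1 k hk).2.2, (h1 (k-1) hkm).2.2,
      show s₀ k - c.st k = (Δ k - Δ (k-1)) + (s₀ (k-1) - c.st (k-1)) by simp [hΔ],
      zpow_add, Equiv.Perm.mul_apply]
  have uniq : ∀ k, 1 ≤ k → k + 1 < n → ∀ t' : ℤ, -2 ≤ t' → t' ≤ 2 →
      dir c k = (rotE ^ t') (dir c (k-1)) → t' = Δ k - Δ (k-1) := by
    intro k hk1 hk t' hu1 hu2 h3'
    have hkm : (k-1)+1 < n := by omega
    obtain ⟨hb1, hb2, heq⟩ := key k hk1 hk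
    rw [heq, (h1 (k-1) hkm).2.2] at h3'
    rw [← Equiv.Perm.mul_apply, ← Equiv.Perm.mul_apply, ← zpow_add, ← zpow_add] at h3'
    have hdvd := rot_pow_eq_iff' h3'
    have h6 : (6:ℤ) ∣ (Δ k - Δ (k-1)) - t' := by
      have he : Δ k - Δ (k-1) + (s₀ (k-1) - c.st (k-1)) - (t' + (s₀ (k-1) - c.st (k-1)))
          = (Δ k - Δ (k-1)) - t' := by ring
      rwa [he] at hdvd
    omega
  constructor
  · intro k hk1 hk
    obtain ⟨hb1, hb2, heq⟩ := key k hk1 hk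
    exact ⟨Δ k - Δ (k-1), ⟨hb1, hb2, heq⟩,
      fun t' ht' => uniq k hk1 hk t' ht'.1 ht'.2.1 ht'.2.2⟩
  · intro t ht i j hij hjn
    have hsum : ∑ k ∈ Finset.Icc (i+1) j, t k
        = ∑ k ∈ Finset.Icc (i+1) j, (Δ k - Δ (k-1)) := by
      apply Finset.sum_congr rfl
      intro k hkmem
      rw [Finset.mem_Icc] at hkmem
      have hk1 : 1 ≤ k := by omega
      have hk : k + 1 < n := by omega
      obtain ⟨u1, u2, u3⟩ := ht k hk1 hk
      exact uniq k hk1 hk (t k) u1 u2 u3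
    have hst0 : (mkInit n s₀).st = s₀ := rfl
    have dd : ∀ m, m + 1 < n → dS (mkInit n s₀) c m = Δ m := by
      intro m hm
      have h0 := (h1 m hm).2.1
      simp only [dS, hst0, hΔ]
      rw [abs_of_nonneg (by omega)]
    rw [hsum, telescope' Δ i j hij, dd j hjn, dd i (by omega)]


end TuringMachineFolding
end

section
/- Let c be any reachable configuration of the line-rotating Turning Machine L³_n, with states s_c(m_i) and positions p_i. Then the Turning Machine T_n whose initial configuration has pos(m_i)=(i,0) and initial state 3 − s_c(m_i) for every i computes the target configuration whose positions are p₀,…,p_{n−1} and whose states are all 0. -/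
namespace TuringMachineFolding

/-! ### Auxiliary development for Statement 8 -/

lemma pos_succ' {n : ℕ} (c : Config n) (m : ℕ) : c.pos (m + 1) = c.pos m + dir c m := by
  unfold dir; ring

lemma rot_rot_eq' (p : Pt) : rot (rot p) = rot p - p := by
  cases p with
  | mk a b =>
    simp only [rot, Prod.mk_sub_mk, Prod.mk.injEq]
    constructor <;> ring

/-- One step preserves the basic invariant. -/
lemma inv_step {n : ℕ} {σ : ℕ → ℤ} {b e : Config n}
    (ih : ∀ i, i < n → 0 ≤ b.st i ∧ b.st i ≤ σ i ∧
      (i + 1 < n → dir b i = rot^[(σ i - b.st i).toNat] (1, 0)))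
    (hstep : Step b e) :
    ∀ i, i < n → 0 ≤ e.st i ∧ e.st i ≤ σ i ∧
      (i + 1 < n → dir e i = rot^[(σ i - e.st i).toNat] (1, 0)) := by
  obtain ⟨i, hi, hne, hst, hpos⟩ := hstep
  have hb := ih i hi
  have hipos : 0 < b.st i := lt_of_le_of_ne hb.1 (Ne.symm hne)
  have h2i := hb.2.1
  have hdelta : delta b i = rot (rot (dir b i)) := by
    unfold delta; rw [if_pos hipos]
  intro j hj
  have hbj := ih j hj
  have hstj : e.st j = nextSt b i j := hst j hj
  by_cases hji : j = i
  · refine ⟨?_, ?_, ?_⟩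
    · rw [hstj]; simp only [nextSt]; rw [if_pos hji, if_pos hipos]; omega
    · rw [hstj]; simp only [nextSt]; rw [if_pos hji, if_pos hipos, hji]; omega
    · intro hjn
      have hpos1 : e.pos (j + 1) = b.pos (j + 1) + delta b i := by
        rw [hpos _ hjn]; unfold nextPos; rw [if_pos (by omega : i < j + 1)]
      have hpos0 : e.pos j = b.pos j := by
        rw [hpos _ (by omega)]; unfold nextPos; rw [if_neg (by omega : ¬ i < j)]
      have hdirn : dir e j = rot (dir b j) := by
        show e.pos (j + 1) - e.pos j = rot (dir b j)
        rw [hpos1, hpos0, hdelta, ← hji, rot_rot_eq']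
        unfold dir
        ring
      rw [hdirn, hbj.2.2 hjn, hstj]
      simp only [nextSt]
      rw [if_pos hji, if_pos hipos, hji]
      have h2j := (ih i hi).2.1
      have hT : (σ i - (b.st i - 1)).toNat = (σ i - b.st i).toNat + 1 := by omega
      rw [hT, Function.iterate_succ_apply']
  · have hstj' : e.st j = b.st j := by
      rw [hstj]; simp only [nextSt]; rw [if_neg hji]
    refine ⟨by rw [hstj']; exact hbj.1, by rw [hstj']; exact hbj.2.1, ?_⟩
    intro hjn
    have hd : dir e j = dir b j := by
      show e.pos (j + 1) - e.pos j = dir b j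
      rw [hpos _ hjn, hpos _ (by omega)]
      unfold nextPos
      rcases lt_or_ge i j with hij | hij
      · rw [if_pos hij, if_pos (by omega)]
        unfold dir; ring
      · rw [if_neg (by omega), if_neg (by omega)]
        rfl
    rw [hd, hstj']
    exact hbj.2.2 hjn

/-- Basic invariant of configurations reachable from `mkInit n σ`. -/
lemma inv_reachable {n : ℕ} {σ : ℕ → ℤ} {d : Config n}
    (hσ : ∀ i, i < n → 0 ≤ σ i) (h : Reachable (mkInit n σ) d) :
    ∀ i, i < n → 0 ≤ d.st i ∧ d.st i ≤ σ i ∧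
      (i + 1 < n → dir d i = rot^[(σ i - d.st i).toNat] (1, 0)) := by
  induction h with
  | refl =>
      intro i hi
      refine ⟨hσ i hi, le_refl _, fun hii => ?_⟩
      have ht : (σ i - (mkInit n σ).st i).toNat = 0 := by
        show (σ i - σ i).toNat = 0; omega
      rw [ht, Function.iterate_zero, id_eq]
      show (((i : ℕ) + 1 : ℤ), (0 : ℤ)) - (((i : ℕ) : ℤ), (0 : ℤ)) = ((1 : ℤ), (0 : ℤ))
      rw [Prod.mk_sub_mk]
      norm_num
  | tail _ hstep ih => exact inv_step ih hstep

/-- `y`-monotonicity from nonnegative `y`-components of directions. -/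
lemma ymono {n : ℕ} {d : Config n}
    (hdir : ∀ i, i + 1 < n → 0 ≤ (dir d i).2) :
    ∀ i j, i ≤ j → j < n → (d.pos i).2 ≤ (d.pos j).2 := by
  intro i j
  induction j with
  | zero =>
      intro hij _
      have h0 : i = 0 := by omega
      rw [h0]
  | succ j ih =>
      intro hij hj
      rcases Nat.lt_or_ge i (j + 1) with h | h
      · have h1 := ih (by omega) (by omega)
        have h2 := hdir j hj
        have h3 : (d.pos (j + 1)).2 = (d.pos j).2 + (dir d j).2 := by
          rw [pos_succ']; rfl
        omega
      · have h0 : i = j + 1 := by omega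
        rw [h0]

/-- Building an applicable move from injectivity of the new positions. -/
lemma applicable_of {n : ℕ} (d : Config n) (i : ℕ) (hi : i < n) (hst : 0 < d.st i)
    (hstep : i + 1 < n → dir d i + delta d i ∈ unitVecs)
    (hinj : ∀ j₁, j₁ < n → ∀ j₂, j₂ < n → nextPos d i j₁ = nextPos d i j₂ → j₁ = j₂) :
    Applicable d i := by
  refine ⟨⟨nextSt d i, nextPos d i, ?_, ?_, hinj⟩, hi, by omega, fun j _ => rfl,
    fun j _ => rfl⟩
  · show nextPos d i 0 = (0, 0)
    unfold nextPos
    rw [if_neg (Nat.not_lt_zero i)]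
    exact d.pos_zero
  · intro j hjn
    show nextPos d i (j + 1) - nextPos d i j ∈ unitVecs
    unfold nextPos
    rcases lt_trichotomy i j with h | h | h
    · rw [if_pos h, if_pos (by omega)]
      have he : d.pos (j + 1) + delta d i - (d.pos j + delta d i) = d.pos (j + 1) - d.pos j := by
        ring
      rw [he]
      exact d.step_unit j hjn
    · have h' : j = i := h.symm
      subst h'
      rw [if_pos (by omega : j < j + 1), if_neg (lt_irrefl j)]
      have he : d.pos (j + 1) + delta d j - d.pos j = dir d j + delta d j := by
        unfold dir; ring
      rw [he]
      exact hstep hjn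
    · rw [if_neg (by omega), if_neg (by omega)]
      exact d.step_unit j hjn

/-- Injectivity of new positions reduced to absence of cross collisions. -/
lemma inj_of_cross {n : ℕ} (d : Config n) (i : ℕ) (δ : Pt) (hδ : delta d i = δ)
    (hcross : ∀ j₁ j₂, j₁ < n → j₂ < n → j₂ ≤ i → i < j₁ → d.pos j₁ + δ = d.pos j₂ → False) :
    ∀ j₁, j₁ < n → ∀ j₂, j₂ < n → nextPos d i j₁ = nextPos d i j₂ → j₁ = j₂ := by
  intro j₁ hj₁ j₂ hj₂ heq
  unfold nextPos at heq
  rw [hδ] at heq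
  by_cases h1 : i < j₁ <;> by_cases h2 : i < j₂
  · rw [if_pos h1, if_pos h2] at heq
    exact d.pos_inj _ hj₁ _ hj₂ (add_right_cancel heq)
  · rw [if_pos h1, if_neg h2] at heq
    exact (hcross j₁ j₂ hj₁ hj₂ (by omega) h1 heq).elim
  · rw [if_neg h1, if_pos h2] at heq
    exact (hcross j₂ j₁ hj₂ hj₁ (by omega) h2 heq.symm).elim
  · rw [if_neg h1, if_neg h2] at heq
    exact d.pos_inj _ hj₁ _ hj₂ heq

/-- No infinite run: the total absolute state decreases at each step. -/
lemma no_infinite {n : ℕ} (c₀ : Config n) :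
    ¬ ∃ f : ℕ → Config n, f 0 = c₀ ∧ ∀ k, Step (f k) (f (k + 1)) := by
  rintro ⟨f, -, hf⟩
  have hdec : ∀ k, (∑ i ∈ Finset.range n, ((f (k + 1)).st i).natAbs)
      < ∑ i ∈ Finset.range n, ((f k).st i).natAbs := by
    intro k
    obtain ⟨i, hi, hne, hst, -⟩ := hf k
    have hi' : i ∈ Finset.range n := Finset.mem_range.mpr hi
    rw [← Finset.sum_erase_add _ _ hi', ← Finset.sum_erase_add _ _ hi']
    have hsame : (∑ j ∈ (Finset.range n).erase i, ((f (k + 1)).st j).natAbs)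
        = ∑ j ∈ (Finset.range n).erase i, ((f k).st j).natAbs := by
      refine Finset.sum_congr rfl ?_
      intro j hj
      obtain ⟨hji, hjr⟩ := Finset.mem_erase.mp hj
      rw [hst j (Finset.mem_range.mp hjr)]
      simp only [nextSt]
      rw [if_neg hji]
    rw [hsame]
    have hlt : ((f (k + 1)).st i).natAbs < ((f k).st i).natAbs := by
      rw [hst i hi]
      simp only [nextSt, if_true]
      split_ifs with h <;> omega
    omega
  have hbound : ∀ k, (∑ i ∈ Finset.range n, ((f k).st i).natAbs) + k
      ≤ ∑ i ∈ Finset.range n, ((f 0).st i).natAbs := by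
    intro k
    induction k with
    | zero => omega
    | succ k ih => have := hdec k; omega
  have h1 := hbound ((∑ i ∈ Finset.range n, ((f 0).st i).natAbs) + 1)
  omega


/-- For any reachable configuration `c` of `L³_n`, the Turning Machine with
initial positions `(i,0)` and initial states `3 - s_c(m_i)` computes the target configuration
whose positions are those of `c` and whose states are all `0`. -/
theorem reachable_of_L3_is_foldable (n : ℕ) (c : Config n)
    (hc : Reachable (lineInit n 3) c) :
    ∃ ct : Config n, Computes (mkInit n (fun i => 3 - c.st i)) ct ∧
      ∀ i < n, ct.st i = 0 ∧ ct.pos i = c.pos i := by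
  classical
  have hc' : Reachable (mkInit n (fun i => if i + 1 = n then 0 else 3)) c := hc
  have hInvC := inv_reachable (σ := fun i => if i + 1 = n then 0 else 3)
    (by intro i _; show (0 : ℤ) ≤ if i + 1 = n then 0 else 3; split <;> norm_num) hc'
  have hCst : ∀ i, i < n → 0 ≤ c.st i ∧ c.st i ≤ 3 := by
    intro i hi
    obtain ⟨h1, h2, -⟩ := hInvC i hi
    refine ⟨h1, ?_⟩
    have h2' : c.st i ≤ if i + 1 = n then 0 else 3 := h2
    by_cases h : i + 1 = n
    · rw [if_pos h] at h2'; omega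
    · rw [if_neg h] at h2'; omega
  refine ⟨⟨fun _ => 0, c.pos, c.pos_zero, c.step_unit, c.pos_inj⟩,
    ⟨no_infinite _, ?_⟩, fun i hi => ⟨rfl, rfl⟩⟩
  intro d hd hterm
  have hInvD := inv_reachable (σ := fun i => 3 - c.st i)
    (by intro i hi; show (0 : ℤ) ≤ 3 - c.st i; have := hCst i hi; omega) hd
  have hdirC : ∀ i, i + 1 < n → dir c i = rot^[(3 - c.st i).toNat] (1, 0) := by
    intro i hii
    have h : dir c i = rot^[((if i + 1 = n then 0 else 3) - c.st i).toNat] (1, 0) :=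
      (hInvC i (by omega)).2.2 hii
    rwa [if_neg (by omega : ¬ i + 1 = n)] at h
  have hdirD : ∀ i, i + 1 < n → dir d i = rot^[(3 - c.st i - d.st i).toNat] (1, 0) :=
    fun i hii => (hInvD i (by omega)).2.2 hii
  have hstD : ∀ i, i < n → 0 ≤ d.st i ∧ d.st i ≤ 3 - c.st i :=
    fun i hi => ⟨(hInvD i hi).1, (hInvD i hi).2.1⟩
  have hmono : ∀ i j, i ≤ j → j < n → (d.pos i).2 ≤ (d.pos j).2 := by
    apply ymono
    intro i hii
    rw [hdirD i hii]
    have h1 := hstD i (by omega)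
    have h2 := hCst i (by omega)
    have hcases : (3 - c.st i - d.st i).toNat = 0 ∨ (3 - c.st i - d.st i).toNat = 1 ∨
        (3 - c.st i - d.st i).toNat = 2 ∨ (3 - c.st i - d.st i).toNat = 3 := by omega
    rcases hcases with h | h | h | h <;> rw [h] <;> decide
  have hdir_eq : ∀ m, m + 1 < n → d.st m = 0 → dir c m = dir d m := by
    intro m hm h0
    rw [hdirC m hm, hdirD m hm, h0, sub_zero]
  have hW : ∀ i, i < n → d.st i ≠ 0 → i + 1 < n →
      dir d i = ((-1 : ℤ), (1 : ℤ)) ∧ dir c i = ((-1 : ℤ), (0 : ℤ)) ∧ 0 < d.st i := by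
    intro i hi hne hii
    have h1 := hstD i hi
    have h2 := hCst i hi
    have hpos : 0 < d.st i := by omega
    have hk : (3 - c.st i - d.st i).toNat = 0 ∨ (3 - c.st i - d.st i).toNat = 1 ∨
        (3 - c.st i - d.st i).toNat = 2 := by omega
    rcases hk with hk | hk | hk
    · exfalso
      have hdir : dir d i = ((1 : ℤ), (0 : ℤ)) := by rw [hdirD i hii, hk]; decide
      have hδ : delta d i = ((-1 : ℤ), (1 : ℤ)) := by
        unfold delta; rw [if_pos hpos, hdir]; decide
      refine hterm i (applicable_of d i hi hpos ?_ (inj_of_cross d i _ hδ ?_))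
      · intro _
        rw [hdir, hδ]
        show ((0 : ℤ), (1 : ℤ)) ∈ unitVecs
        simp [unitVecs]
      · intro j₁ j₂ hj₁ hj₂ hle hgt heq
        have hy : (d.pos j₁).2 + 1 = (d.pos j₂).2 := by
          have h := congrArg Prod.snd heq
          simpa [Prod.snd_add] using h
        have m1 : (d.pos j₂).2 ≤ (d.pos i).2 := hmono j₂ i hle hi
        have m2 : (d.pos (i + 1)).2 ≤ (d.pos j₁).2 := hmono (i + 1) j₁ (by omega) hj₁
        have m3 : (d.pos (i + 1)).2 = (d.pos i).2 + 0 := by rw [pos_succ', hdir]; rfl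
        omega
    · exfalso
      have hdir : dir d i = ((0 : ℤ), (1 : ℤ)) := by rw [hdirD i hii, hk]; decide
      have hδ : delta d i = ((-1 : ℤ), (0 : ℤ)) := by
        unfold delta; rw [if_pos hpos, hdir]; decide
      refine hterm i (applicable_of d i hi hpos ?_ (inj_of_cross d i _ hδ ?_))
      · intro _
        rw [hdir, hδ]
        show ((-1 : ℤ), (1 : ℤ)) ∈ unitVecs
        simp [unitVecs]
      · intro j₁ j₂ hj₁ hj₂ hle hgt heq
        have hy : (d.pos j₁).2 = (d.pos j₂).2 := by
          have h := congrArg Prod.snd heq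
          simpa [Prod.snd_add] using h
        have m1 : (d.pos j₂).2 ≤ (d.pos i).2 := hmono j₂ i hle hi
        have m2 : (d.pos (i + 1)).2 ≤ (d.pos j₁).2 := hmono (i + 1) j₁ (by omega) hj₁
        have m3 : (d.pos (i + 1)).2 = (d.pos i).2 + 1 := by rw [pos_succ', hdir]; rfl
        omega
    · have hdir : dir d i = ((-1 : ℤ), (1 : ℤ)) := by rw [hdirD i hii, hk]; decide
      have hc3 : c.st i = 0 := by omega
      have hdirc : dir c i = ((-1 : ℤ), (0 : ℤ)) := by
        rw [hdirC i hii, hc3]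
        decide
      exact ⟨hdir, hdirc, hpos⟩
  have hall0 : ∀ i, i < n → d.st i = 0 := by
    by_contra hcon
    push_neg at hcon
    obtain ⟨i₀, hi₀, hne₀⟩ := hcon
    have hex : ∃ i, i < n ∧ d.st i ≠ 0 := ⟨i₀, hi₀, hne₀⟩
    have hlast : ∀ i, i < n → d.st i ≠ 0 → i + 1 < n := by
      intro i hi hne
      by_contra hii
      have hpos : 0 < d.st i := by have := (hstD i hi).1; omega
      refine hterm i (applicable_of d i hi hpos (fun h => absurd h hii) ?_)
      intro j₁ hj₁ j₂ hj₂ heq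
      unfold nextPos at heq
      rw [if_neg (by omega), if_neg (by omega)] at heq
      exact d.pos_inj _ hj₁ _ hj₂ heq
    obtain ⟨hi₁n, hi₁ne⟩ : Nat.find hex < n ∧ d.st (Nat.find hex) ≠ 0 := Nat.find_spec hex
    set i₁ := Nat.find hex with hi₁def
    have hmin : ∀ m, m < i₁ → d.st m = 0 := by
      intro m hm
      by_contra hmne
      exact absurd ⟨by omega, hmne⟩ (Nat.find_min hex hm)
    have hii₁ : i₁ + 1 < n := hlast i₁ hi₁n hi₁ne
    obtain ⟨hdD, hdC, hstpos⟩ := hW i₁ hi₁n hi₁ne hii₁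
    have hδ : delta d i₁ = ((0 : ℤ), (-1 : ℤ)) := by
      unfold delta; rw [if_pos hstpos, hdD]; decide
    have hpre : ∀ m, m ≤ i₁ → c.pos m = d.pos m := by
      intro m
      induction m with
      | zero => intro _; rw [c.pos_zero, d.pos_zero]
      | succ m ih =>
          intro hm
          have h0 : d.st m = 0 := hmin m (by omega)
          have hde : dir c m = dir d m := hdir_eq m (by omega) h0
          rw [pos_succ' c m, pos_succ' d m, hde, ih (by omega)]
    refine hterm i₁ (applicable_of d i₁ hi₁n hstpos ?_ (inj_of_cross d i₁ _ hδ ?_))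
    · intro _
      rw [hdD, hδ]
      show ((-1 : ℤ), (0 : ℤ)) ∈ unitVecs
      simp [unitVecs]
    · intro j₁ j₂ hj₁ hj₂ hle hgt heq
      have hy : (d.pos j₁).2 - 1 = (d.pos j₂).2 := by
        have h := congrArg Prod.snd heq
        simpa [Prod.snd_add, sub_eq_add_neg] using h
      have m1 : (d.pos j₂).2 ≤ (d.pos i₁).2 := hmono j₂ i₁ hle hi₁n
      have m3 : (d.pos (i₁ + 1)).2 = (d.pos i₁).2 + 1 := by rw [pos_succ', hdD]; rfl
      have m2 : (d.pos (i₁ + 1)).2 ≤ (d.pos j₁).2 := hmono (i₁ + 1) j₁ (by omega) hj₁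
      have hyj : (d.pos j₁).2 = (d.pos i₁).2 + 1 := by omega
      have hmid : ∀ a, i₁ < a → a < j₁ → d.st a = 0 := by
        intro a ha1 ha2
        by_contra hna
        have han : a < n := by omega
        obtain ⟨hda, -, -⟩ := hW a han hna (by omega)
        have n1 : (d.pos (a + 1)).2 = (d.pos a).2 + 1 := by rw [pos_succ', hda]; rfl
        have n2 : (d.pos (i₁ + 1)).2 ≤ (d.pos a).2 := hmono (i₁ + 1) a (by omega) han
        have n3 : (d.pos (a + 1)).2 ≤ (d.pos j₁).2 := hmono (a + 1) j₁ (by omega) hj₁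
        omega
      have hbase : c.pos (i₁ + 1) = d.pos (i₁ + 1) + ((0 : ℤ), (-1 : ℤ)) := by
        rw [pos_succ' c i₁, pos_succ' d i₁, hdC, hdD, hpre i₁ le_rfl]
        have hv : ((-1 : ℤ), (1 : ℤ)) + ((0 : ℤ), (-1 : ℤ)) = ((-1 : ℤ), (0 : ℤ)) := by decide
        rw [add_assoc, hv]
      have hoffs : ∀ m, i₁ + 1 ≤ m → m ≤ j₁ → c.pos m = d.pos m + ((0 : ℤ), (-1 : ℤ)) := by
        intro m hm
        induction m, hm using Nat.le_induction with
        | base => intro _; exact hbase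
        | succ m hm ih =>
            intro hmj
            have h0 : d.st m = 0 := hmid m (by omega) (by omega)
            have hde : dir c m = dir d m := hdir_eq m (by omega) h0
            rw [pos_succ' c m, pos_succ' d m, hde, ih (by omega)]
            ring
      have hcj : c.pos j₂ = c.pos j₁ := by
        rw [hpre j₂ hle, hoffs j₁ (by omega) le_rfl]
        exact heq.symm
      have hj := c.pos_inj j₂ hj₂ j₁ hj₁ hcj
      omega
  have hposeq : ∀ i, i < n → d.pos i = c.pos i := by
    intro i
    induction i with
    | zero => intro _; rw [c.pos_zero, d.pos_zero]
    | succ m ih =>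
        intro hm
        have h0 : d.st m = 0 := hall0 m (by omega)
        have hde : dir c m = dir d m := hdir_eq m hm h0
        rw [pos_succ' c m, pos_succ' d m, hde, ih (by omega)]
  intro i hi
  exact ⟨hall0 i hi, hposeq i hi⟩


end TuringMachineFolding
end

section
/- Every positive or negative zig-zag path p₀,…,p_{n−1} is foldable by a Turning Machine: there exists an assignment of initial integer states to the n monomers of a Turning Machine with initial positions pos(m_i)=(i,0) such that the machine computes the target configuration with pos(m_i) = p_i − p₀ for all i and all states 0. -/
namespace TuringMachineFolding

/-! ### Auxiliary development -/

lemma rot_rot (v : Pt) : rot (rot v) = rot v - v := by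
  obtain ⟨a, b⟩ := v
  simp only [rot, Prod.mk_sub_mk, Prod.mk.injEq]
  constructor <;> ring

lemma rotInv_rotInv (v : Pt) : rotInv (rotInv v) = rotInv v - v := by
  obtain ⟨a, b⟩ := v
  simp only [rotInv, Prod.mk_sub_mk, Prod.mk.injEq]
  constructor <;> ring

lemma rot_mem_unitVecs {v : Pt} (h : v ∈ unitVecs) : rot v ∈ unitVecs := by
  simp only [unitVecs, Set.mem_insert_iff, Set.mem_singleton_iff] at h ⊢
  rcases h with rfl | rfl | rfl | rfl | rfl | rfl <;> simp [rot]

lemma rotInv_mem_unitVecs {v : Pt} (h : v ∈ unitVecs) : rotInv v ∈ unitVecs := by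
  simp only [unitVecs, Set.mem_insert_iff, Set.mem_singleton_iff] at h ⊢
  rcases h with rfl | rfl | rfl | rfl | rfl | rfl <;> simp [rotInv]

/-- The step vector after `k` turns, for `k ∈ [0,3]`. -/
def uvec (k : ℤ) : Pt :=
  if k = 0 then (1, 0) else if k = 1 then (0, 1) else if k = 2 then (-1, 1) else (-1, 0)

lemma uvec_snd_nonneg (k : ℤ) : 0 ≤ (uvec k).2 := by
  unfold uvec; split_ifs <;> norm_num

lemma uvec_succ {k : ℤ} (h0 : 0 ≤ k) (h2 : k ≤ 2) : uvec (k + 1) = rot (uvec k) := by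
  interval_cases k <;> simp [uvec, rot]

/-- The turning number of a positive zig-zag step. -/
def scode (v : Pt) : ℤ :=
  if v = (1, 0) then 0 else if v = (0, 1) then 1 else if v = (-1, 1) then 2 else 3

lemma scode_nonneg (v : Pt) : 0 ≤ scode v := by unfold scode; split_ifs <;> norm_num

lemma scode_le (v : Pt) : scode v ≤ 3 := by unfold scode; split_ifs <;> norm_num

lemma uvec_scode {v : Pt}
    (h : v ∈ ({((1 : ℤ), (0 : ℤ)), (-1, 0), (0, 1), (-1, 1)} : Set Pt)) :
    uvec (scode v) = v := by
  simp only [Set.mem_insert_iff, Set.mem_singleton_iff] at h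
  rcases h with rfl | rfl | rfl | rfl <;> simp [scode, uvec]
lemma sum_update {M : Type*} [AddCommGroup M] (f g : ℕ → M) (j i : ℕ) (hij : i < j)
    (h : ∀ k < j, k ≠ i → g k = f k) :
    ∑ k ∈ Finset.range j, g k = (∑ k ∈ Finset.range j, f k) + (g i - f i) := by
  have key : ∑ k ∈ Finset.range j, (g k - f k) = g i - f i := by
    refine Finset.sum_eq_single_of_mem i (Finset.mem_range.2 hij) ?_
    intro k hk hki
    rw [h k (Finset.mem_range.1 hk) hki, sub_self]
  have h2 : (∑ k ∈ Finset.range j, g k) - ∑ k ∈ Finset.range j, f k = g i - f i := by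
    rw [← Finset.sum_sub_distrib, key]
  rw [sub_eq_iff_eq_add'] at h2
  rw [h2, add_comm]

/-- Initial state assignment for a positive zig-zag target path. -/
def sInit (n : ℕ) (p : ℕ → Pt) : ℕ → ℤ :=
  fun i => if i + 1 < n then scode (p (i + 1) - p i) else 0

lemma sInit_nonneg (n : ℕ) (p : ℕ → Pt) (i : ℕ) : 0 ≤ sInit n p i := by
  unfold sInit; split_ifs; exacts [scode_nonneg _, le_refl _]

lemma sInit_le (n : ℕ) (p : ℕ → Pt) (i : ℕ) : sInit n p i ≤ 3 := by
  unfold sInit; split_ifs; exacts [scode_le _, by norm_num]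

lemma uvec_sInit {n : ℕ} {p : ℕ → Pt} (hp : PosZigZag n p) {i : ℕ} (hi : i + 1 < n) :
    uvec (sInit n p i) = p (i + 1) - p i := by
  rw [sInit, if_pos hi]
  exact uvec_scode (hp.2 i hi)

/-- The invariant maintained by the machine folding a positive zig-zag path. -/
def Inv (n : ℕ) (p : ℕ → Pt) (c : Config n) : Prop :=
  (∀ i < n, 0 ≤ c.st i ∧ c.st i ≤ sInit n p i) ∧
  (∀ j < n, c.pos j = ∑ i ∈ Finset.range j, uvec (sInit n p i - c.st i))

lemma inv_init (n : ℕ) (p : ℕ → Pt) : Inv n p (mkInit n (sInit n p)) := by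
  constructor
  · intro i _
    exact ⟨sInit_nonneg n p i, le_refl _⟩
  · intro j _
    show ((j : ℤ), (0 : ℤ)) = _
    induction j with
    | zero => simp
    | succ m ih =>
      rw [Finset.sum_range_succ, ← ih (by omega)]
      have h0 : sInit n p m - (mkInit n (sInit n p)).st m = 0 := sub_self _
      rw [h0]
      simp only [uvec, if_pos rfl, Prod.ext_iff, Prod.fst_add, Prod.snd_add]
      constructor
      · push_cast; ring
      · norm_num

lemma inv_nonneg {n : ℕ} {p : ℕ → Pt} {c : Config n} (hc : Inv n p c) {i : ℕ}
    (hi : i < n) (hst : c.st i ≠ 0) : 0 < c.st i ∧ i + 1 < n := by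
  obtain ⟨h0, h1⟩ := hc.1 i hi
  refine ⟨lt_of_le_of_ne h0 (Ne.symm hst), ?_⟩
  by_contra h
  have : sInit n p i = 0 := by unfold sInit; rw [if_neg h]
  omega

/-- The direction of a monomer, under the invariant. -/
lemma inv_dir {n : ℕ} {p : ℕ → Pt} {c : Config n} (hc : Inv n p c) {i : ℕ}
    (hi : i + 1 < n) : dir c i = uvec (sInit n p i - c.st i) := by
  rw [dir, hc.2 (i + 1) hi, hc.2 i (by omega), Finset.sum_range_succ]
  abel

lemma inv_step_s9 {n : ℕ} {p : ℕ → Pt} {c c' : Config n} {i : ℕ} (hc : Inv n p c)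
    (h : StepAt c i c') : Inv n p c' := by
  obtain ⟨hin, hst, hsts, hposs⟩ := h
  obtain ⟨hpos, hi1⟩ := inv_nonneg hc hin hst
  have hbd := hc.1 i hin
  have hstc : ∀ j < n, c'.st j = if j = i then c.st i - 1 else c.st j := by
    intro j hj
    rw [hsts j hj, nextSt, if_pos hpos]
  have hs3 := sInit_le n p i
  have ha0 : 0 ≤ sInit n p i - c.st i := by omega
  have ha2 : sInit n p i - c.st i ≤ 2 := by omega
  have hδ : delta c i = uvec (sInit n p i - c.st i + 1) - uvec (sInit n p i - c.st i) := by
    rw [delta, if_pos hpos, inv_dir hc hi1, rot_rot, uvec_succ ha0 ha2]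
  constructor
  · intro j hj
    rw [hstc j hj]
    split_ifs with hji
    · subst hji; omega
    · exact hc.1 j hj
  · intro j hj
    rw [hposs j hj, nextPos]
    split_ifs with hij
    · -- j > i : position shifted by delta
      rw [hc.2 j hj, hδ]
      rw [sum_update (fun k => uvec (sInit n p k - c.st k))
        (fun k => uvec (sInit n p k - c'.st k)) j i hij ?_]
      · have hci : c'.st i = c.st i - 1 := by rw [hstc i hin, if_pos rfl]
        simp only [hci]
        have he : sInit n p i - (c.st i - 1) = sInit n p i - c.st i + 1 := by ring
        rw [he]
      · intro k hk hki
        show uvec (sInit n p k - c'.st k) = uvec (sInit n p k - c.st k)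
        rw [hstc k (by omega), if_neg hki]
    · -- j ≤ i : position unchanged
      rw [hc.2 j hj]
      refine Finset.sum_congr rfl ?_
      intro k hk
      have hk' := Finset.mem_range.1 hk
      rw [hstc k (by omega), if_neg (by omega)]

lemma reachable_inv {n : ℕ} {p : ℕ → Pt} {c : Config n}
    (h : Reachable (mkInit n (sInit n p)) c) : Inv n p c := by
  induction h with
  | refl => exact inv_init n p
  | tail _ hstep ih => obtain ⟨i, hi⟩ := hstep; exact inv_step_s9 ih hi
/-- Total remaining turning, as a termination measure. -/
def meas {n : ℕ} (c : Config n) : ℕ := ∑ i ∈ Finset.range n, (c.st i).toNat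

lemma meas_step {n : ℕ} {p : ℕ → Pt} {c c' : Config n} {i : ℕ} (hc : Inv n p c)
    (h : StepAt c i c') : meas c' < meas c := by
  obtain ⟨hin, hst, hsts, hposs⟩ := h
  obtain ⟨hpos, _⟩ := inv_nonneg hc hin hst
  refine Finset.sum_lt_sum (fun j hj => ?_) ⟨i, Finset.mem_range.2 hin, ?_⟩
  · have hj' := Finset.mem_range.1 hj
    rw [hsts j hj', nextSt]
    by_cases hji : j = i
    · subst hji; rw [if_pos rfl, if_pos hpos]; omega
    · rw [if_neg hji]
  · rw [hsts i hin, nextSt, if_pos rfl, if_pos hpos]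
    omega

lemma reachable_step {n : ℕ} {c₀ c c' : Config n} (h : Reachable c₀ c) (h' : Step c c') :
    Reachable c₀ c' := Relation.ReflTransGen.tail h h'

lemma no_infinite_run (n : ℕ) (p : ℕ → Pt) :
    ¬ ∃ f : ℕ → Config n, f 0 = mkInit n (sInit n p) ∧ ∀ k, Step (f k) (f (k + 1)) := by
  rintro ⟨f, hf0, hf⟩
  have hreach : ∀ k, Reachable (mkInit n (sInit n p)) (f k) := by
    intro k
    induction k with
    | zero => exact hf0 ▸ Relation.ReflTransGen.refl
    | succ m ih => exact reachable_step ih (hf m)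
  have hdec : ∀ k, meas (f (k + 1)) < meas (f k) := by
    intro k
    obtain ⟨i, hi⟩ := hf k
    exact meas_step (reachable_inv (hreach k)) hi
  have hle : ∀ k, meas (f k) + k ≤ meas (f 0) := by
    intro k
    induction k with
    | zero => omega
    | succ m ih => have := hdec m; omega
  have := hle (meas (f 0) + 1)
  omega

lemma add_rot_rot (v : Pt) : v + rot (rot v) = rot v := by
  rw [rot_rot]; abel

lemma add_rotInv_rotInv (v : Pt) : v + rotInv (rotInv v) = rotInv v := by
  rw [rotInv_rotInv]; abel

/-- Sufficient condition for applicability of the turning rule. -/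
lemma applicable_of_s9 {n : ℕ} (c : Config n) (i : ℕ) (hi1 : i + 1 < n) (hst : c.st i ≠ 0)
    (hne : ∀ j k, k ≤ i → i < j → j < n → c.pos j + delta c i ≠ c.pos k) :
    Applicable c i := by
  have hin : i < n := by omega
  refine ⟨⟨nextSt c i, nextPos c i, ?_, ?_, ?_⟩, hin, hst, fun j _ => rfl, fun j _ => rfl⟩
  · show nextPos c i 0 = (0, 0)
    rw [nextPos, if_neg (by omega), c.pos_zero]
  · intro j hj
    show nextPos c i (j + 1) - nextPos c i j ∈ unitVecs
    have hu := c.step_unit j hj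
    by_cases h1 : i < j
    · rw [nextPos, nextPos, if_pos (by omega), if_pos h1]
      have : c.pos (j + 1) + delta c i - (c.pos j + delta c i) = c.pos (j + 1) - c.pos j := by
        abel
      rw [this]; exact hu
    · by_cases h2 : i < j + 1
      · have hji : j = i := by omega
        subst hji
        rw [nextPos, nextPos, if_pos h2, if_neg h1]
        have : c.pos (j + 1) + delta c j - c.pos j = (c.pos (j + 1) - c.pos j) + delta c j := by
          abel
        rw [this, delta]
        split_ifs with hsgn
        · rw [← dir, add_rot_rot]
          exact rot_mem_unitVecs hu
        · rw [← dir, add_rotInv_rotInv]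
          exact rotInv_mem_unitVecs hu
      · rw [nextPos, nextPos, if_neg h2, if_neg h1]
        exact hu
  · intro j hj k hk hjk
    simp only [nextPos] at hjk
    by_cases h1 : i < j <;> by_cases h2 : i < k
    · rw [if_pos h1, if_pos h2] at hjk
      exact c.pos_inj j hj k hk (by have := add_right_cancel hjk; exact this)
    · rw [if_pos h1, if_neg h2] at hjk
      exact absurd hjk (hne j k (by omega) h1 hj)
    · rw [if_neg h1, if_pos h2] at hjk
      exact absurd hjk.symm (hne k j (by omega) h2 hk)
    · rw [if_neg h1, if_neg h2] at hjk
      exact c.pos_inj j hj k hk hjk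
lemma inv_delta {n : ℕ} {p : ℕ → Pt} {c : Config n} (hc : Inv n p c) {i : ℕ}
    (hi : i < n) (hst : c.st i ≠ 0) :
    delta c i = uvec (sInit n p i - c.st i + 1) - uvec (sInit n p i - c.st i) := by
  obtain ⟨hpos, hi1⟩ := inv_nonneg hc hi hst
  have hbd := hc.1 i hi
  have hs3 := sInit_le n p i
  rw [delta, if_pos hpos, inv_dir hc hi1, rot_rot, uvec_succ (by omega) (by omega)]

lemma not_blocked {n : ℕ} {p : ℕ → Pt} (hp : PosZigZag n p) {c : Config n} (hc : Inv n p c)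
    (hex : ∃ i < n, c.st i ≠ 0) : ∃ i, Applicable c i := by
  classical
  have hmono : ∀ j k : ℕ, j ≤ k → k < n → (c.pos j).2 ≤ (c.pos k).2 := by
    intro j k hjk hk
    rw [hc.2 j (by omega), hc.2 k hk, Prod.snd_sum, Prod.snd_sum]
    exact Finset.sum_le_sum_of_subset_of_nonneg
      (Finset.range_subset_range.2 hjk) (fun m _ _ => uvec_snd_nonneg _)
  have hstep : ∀ i : ℕ, i + 1 < n → c.pos (i + 1) = c.pos i + uvec (sInit n p i - c.st i) := by
    intro i hi
    have hd := inv_dir hc hi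
    rw [dir] at hd
    rw [← hd]; abel
  by_cases hA : ∃ i, i < n ∧ c.st i ≠ 0 ∧ sInit n p i - c.st i ≤ 1
  · -- Case A : some movable monomer with turning progress ≤ 1
    obtain ⟨i, hi, hst, ha1⟩ := hA
    obtain ⟨hpos, hi1⟩ := inv_nonneg hc hi hst
    have hbd := hc.1 i hi
    have ha0 : 0 ≤ sInit n p i - c.st i := by omega
    have hu1 : (uvec (sInit n p i - c.st i + 1)).2 = 1 := by
      have h01 : sInit n p i - c.st i = 0 ∨ sInit n p i - c.st i = 1 := by omega
      rcases h01 with h | h <;> rw [h] <;> norm_num [uvec]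
    refine ⟨i, applicable_of_s9 c i hi1 hst ?_⟩
    intro j k hk hij hj heq
    have h2 := congrArg Prod.snd heq
    rw [Prod.snd_add, inv_delta hc hi hst, Prod.snd_sub, hu1] at h2
    have hjge : (c.pos (i + 1)).2 ≤ (c.pos j).2 := hmono (i + 1) j hij hj
    have hik : (c.pos k).2 ≤ (c.pos i).2 := hmono k i hk hi
    have hYi1 : (c.pos (i + 1)).2 = (c.pos i).2 + (uvec (sInit n p i - c.st i)).2 := by
      rw [hstep i hi1, Prod.snd_add]
    have hnn := uvec_snd_nonneg (sInit n p i - c.st i)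
    omega
  · -- Case B : all movable monomers have turning progress exactly 2
    push_neg at hA
    obtain ⟨i₀, hi₀, hst₀⟩ := hex
    set T : Finset ℕ := (Finset.range n).filter (fun i => c.st i ≠ 0) with hT
    have hTne : T.Nonempty := ⟨i₀, by simp [hT, hi₀, hst₀]⟩
    set i := T.max' hTne with hidef
    have hiT : i ∈ T := T.max'_mem hTne
    have hi : i < n := by
      have := Finset.mem_filter.1 hiT; exact Finset.mem_range.1 this.1
    have hst : c.st i ≠ 0 := (Finset.mem_filter.1 hiT).2
    have hmax : ∀ j, j < n → c.st j ≠ 0 → j ≤ i := by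
      intro j hjn hjst
      exact T.le_max' j (by simp [hT, hjn, hjst])
    obtain ⟨hpos, hi1⟩ := inv_nonneg hc hi hst
    have hbd := hc.1 i hi
    have hs3 := sInit_le n p i
    have hai : sInit n p i - c.st i = 2 := by
      have := hA i hi hst; omega
    have hsi : sInit n p i = 3 := by omega
    refine ⟨i, applicable_of_s9 c i hi1 hst ?_⟩
    intro j k hk hij hj heq
    have hkn : k < n := by omega
    have hδv : delta c i = ((0 : ℤ), (-1 : ℤ)) := by
      rw [inv_delta hc hi hst, hai]
      norm_num [uvec]
    rw [hδv] at heq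
    -- second coordinates
    have hYk : (c.pos k).2 ≤ (c.pos i).2 := hmono k i hk hi
    have hYj : (c.pos i).2 + 1 ≤ (c.pos j).2 := by
      have h1 : (c.pos (i + 1)).2 = (c.pos i).2 + 1 := by
        rw [hstep i hi1, Prod.snd_add, hai]
        norm_num [uvec]
      have := hmono (i + 1) j hij hj
      omega
    have hsnd := congrArg Prod.snd heq
    rw [Prod.snd_add] at hsnd
    have hYjv : (c.pos j).2 = (c.pos i).2 + 1 := by
      simp only at hsnd; omega
    have hYkv : (c.pos k).2 = (c.pos i).2 := by
      simp only at hsnd; omega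
    -- per-step comparison with the target path on [k, j)
    have hsm : ∀ m, k ≤ m → m < j →
        (uvec (sInit n p m - c.st m)).1 = (p (m + 1) - p m).1 ∧
        (m ≠ i → (uvec (sInit n p m - c.st m)).2 = (p (m + 1) - p m).2) := by
      intro m hkm hmj
      have hm1 : m + 1 < n := by omega
      have htgt : p (m + 1) - p m = uvec (sInit n p m) := (uvec_sInit hp hm1).symm
      by_cases hstm : c.st m = 0
      · rw [htgt, hstm, sub_zero]
        exact ⟨rfl, fun _ => rfl⟩
      · have hbm := hc.1 m (by omega)
        have hsm3 := sInit_le n p m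
        have ham : sInit n p m - c.st m = 2 := by
          have := hA m (by omega) hstm; omega
        have hsmv : sInit n p m = 3 := by omega
        have hmi : m ≤ i := hmax m (by omega) hstm
        rcases lt_or_eq_of_le hmi with hlt | hmeq
        · -- impossible : a vertical unfinished step strictly below i in the same rows
          exfalso
          have hYm : (c.pos k).2 ≤ (c.pos m).2 := hmono k m hkm (by omega)
          have hYm1 : (c.pos (m + 1)).2 ≤ (c.pos i).2 := hmono (m + 1) i hlt hi
          have hsv : (c.pos (m + 1)).2 = (c.pos m).2 + 1 := by
            rw [hstep m hm1, Prod.snd_add, ham]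
            norm_num [uvec]
          omega
        · subst hmeq
          rw [htgt, ham, hsmv]
          norm_num [uvec]
  -- sums over [k, j)
    have hposj := hc.2 j hj
    have hposk := hc.2 k hkn
    have hkj : k ≤ j := by omega
    have hsum1 : c.pos j - c.pos k = ∑ m ∈ Finset.Ico k j, uvec (sInit n p m - c.st m) := by
      rw [hposj, hposk, Finset.sum_Ico_eq_sub _ hkj]
    have hsum2 : p j - p k = ∑ m ∈ Finset.Ico k j, (p (m + 1) - p m) := by
      rw [Finset.sum_Ico_eq_sub _ hkj, Finset.sum_range_sub, Finset.sum_range_sub]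
      abel
    have hdiff : c.pos j - c.pos k = ((0 : ℤ), (1 : ℤ)) := by
      rw [← heq]; abel_nf; rw [Prod.ext_iff]; constructor <;> norm_num
    -- first coordinates agree
    have hfst : (p j - p k).1 = 0 := by
      rw [hsum2, Prod.fst_sum]
      have : ∀ m ∈ Finset.Ico k j, (p (m + 1) - p m).1 = (uvec (sInit n p m - c.st m)).1 := by
        intro m hm
        obtain ⟨h1, h2⟩ := Finset.mem_Ico.1 hm
        exact ((hsm m h1 h2).1).symm
      rw [Finset.sum_congr rfl this, ← Prod.fst_sum, ← hsum1, hdiff]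
    -- second coordinates : the sums differ by exactly 1 (at index i)
    have hsnd0 : (p j - p k).2 = 0 := by
      have hkey : ∑ m ∈ Finset.Ico k j,
          ((uvec (sInit n p m - c.st m)).2 - (p (m + 1) - p m).2) = 1 := by
        rw [Finset.sum_eq_single_of_mem i (Finset.mem_Ico.2 ⟨hk, hij⟩)]
        · have hti : p (i + 1) - p i = uvec (sInit n p i) := (uvec_sInit hp hi1).symm
          rw [hai, hti, hsi]
          norm_num [uvec]
        · intro m hm hmi
          obtain ⟨h1, h2⟩ := Finset.mem_Ico.1 hm
          rw [(hsm m h1 h2).2 hmi, sub_self]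
      rw [Finset.sum_sub_distrib] at hkey
      have hu2 : ∑ m ∈ Finset.Ico k j, (uvec (sInit n p m - c.st m)).2 = 1 := by
        rw [← Prod.snd_sum, ← hsum1, hdiff]
      rw [hsum2, Prod.snd_sum]
      omega
    have hpeq : p j = p k := by
      have h1 : p j - p k = 0 := by
        rw [Prod.ext_iff]
        exact ⟨hfst, hsnd0⟩
      exact sub_eq_zero.1 h1
    have := hp.1 j hj k hkn hpeq
    omega
lemma pos_step_mem_unit {v : Pt}
    (h : v ∈ ({((1 : ℤ), (0 : ℤ)), (-1, 0), (0, 1), (-1, 1)} : Set Pt)) : v ∈ unitVecs := by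
  simp only [Set.mem_insert_iff, Set.mem_singleton_iff, unitVecs] at *
  tauto

theorem pos_foldable {n : ℕ} {p : ℕ → Pt} (hp : PosZigZag n p) :
    ∃ s₀ : ℕ → ℤ, ∃ ct : Config n, Computes (mkInit n s₀) ct ∧
      (∀ i < n, ct.st i = 0) ∧ ∀ i < n, ct.pos i = p i - p 0 := by
  have hterm : ∀ c : Config n, Reachable (mkInit n (sInit n p)) c → Terminal c →
      (∀ i < n, c.st i = 0) ∧ (∀ i < n, c.pos i = p i - p 0) := by
    intro c hr ht
    have hinv := reachable_inv hr
    have hz : ∀ i < n, c.st i = 0 := by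
      by_contra hcon
      push_neg at hcon
      obtain ⟨i, hi, hsti⟩ := hcon
      obtain ⟨m, hm⟩ := not_blocked hp hinv ⟨i, hi, hsti⟩
      exact ht m hm
    refine ⟨hz, ?_⟩
    intro j hj
    rw [hinv.2 j hj]
    have hcg : ∀ m ∈ Finset.range j, uvec (sInit n p m - c.st m) = p (m + 1) - p m := by
      intro m hm
      have hm' := Finset.mem_range.1 hm
      rw [hz m (by omega), sub_zero]
      exact uvec_sInit hp (by omega)
    rw [Finset.sum_congr rfl hcg, Finset.sum_range_sub]
  refine ⟨sInit n p,
    ⟨fun _ => 0, fun j => if j < n then p j - p 0 else (0, 0), ?_, ?_, ?_⟩,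
    ⟨no_infinite_run n p, ?_⟩, fun i hi => rfl, fun i hi => ?_⟩
  · beta_reduce
    split_ifs <;> simp <;> rfl
  · intro i hi
    beta_reduce
    rw [if_pos hi, if_pos (by omega : i < n)]
    have hmem := hp.2 i hi
    have : p (i + 1) - p 0 - (p i - p 0) = p (i + 1) - p i := by abel
    rw [this]
    exact pos_step_mem_unit hmem
  · intro i hi j hj hij
    beta_reduce at hij
    rw [if_pos hi, if_pos hj] at hij
    exact hp.1 i hi j hj (by
      have h2 := congrArg (fun q => q + p 0) hij
      simpa using h2)
  · intro c hr ht i hi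
    refine ⟨(hterm c hr ht).1 i hi, ?_⟩
    show c.pos i = if i < n then p i - p 0 else (0, 0)
    rw [if_pos hi]
    exact (hterm c hr ht).2 i hi
  · show (if i < n then p i - p 0 else (0, 0)) = p i - p 0
    rw [if_pos hi]
/-- Reflection across the `x`-axis of the triangular grid. -/
def mu : Pt → Pt := fun v => (v.1 + v.2, -v.2)

lemma mu_mu (v : Pt) : mu (mu v) = v := by
  obtain ⟨a, b⟩ := v
  simp only [mu, Prod.mk.injEq]
  constructor <;> ring

lemma mu_inj {a b : Pt} (h : mu a = mu b) : a = b := by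
  have := congrArg mu h
  rwa [mu_mu, mu_mu] at this

lemma mu_sub (a b : Pt) : mu (a - b) = mu a - mu b := by
  obtain ⟨a1, a2⟩ := a
  obtain ⟨b1, b2⟩ := b
  simp only [mu, Prod.mk_sub_mk, Prod.mk.injEq]
  constructor <;> ring

lemma mu_add (a b : Pt) : mu (a + b) = mu a + mu b := by
  obtain ⟨a1, a2⟩ := a
  obtain ⟨b1, b2⟩ := b
  simp only [mu, Prod.mk_add_mk, Prod.mk.injEq]
  constructor <;> ring

lemma mu_mem_unitVecs {v : Pt} (h : v ∈ unitVecs) : mu v ∈ unitVecs := by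
  simp only [unitVecs, Set.mem_insert_iff, Set.mem_singleton_iff] at h ⊢
  rcases h with rfl | rfl | rfl | rfl | rfl | rfl <;> simp [mu]

lemma mu_rot_rot (v : Pt) : mu (rot (rot v)) = rotInv (rotInv (mu v)) := by
  obtain ⟨a, b⟩ := v
  simp only [mu, rot, rotInv, Prod.mk.injEq]
  constructor <;> ring

lemma mu_rotInv_rotInv (v : Pt) : mu (rotInv (rotInv v)) = rot (rot (mu v)) := by
  obtain ⟨a, b⟩ := v
  simp only [mu, rot, rotInv, Prod.mk.injEq]
  constructor <;> ring

lemma Config.ext' {n : ℕ} {c c' : Config n} (h1 : c.st = c'.st) (h2 : c.pos = c'.pos) :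
    c = c' := by
  cases c; cases c'
  cases h1; cases h2
  rfl

/-- The mirror image of a configuration. -/
def mirror {n : ℕ} (c : Config n) : Config n where
  st := fun j => -c.st j
  pos := fun j => mu (c.pos j)
  pos_zero := by show mu (c.pos 0) = (0, 0); rw [c.pos_zero]; simp [mu]
  step_unit := by
    intro i hi
    show mu (c.pos (i + 1)) - mu (c.pos i) ∈ unitVecs
    rw [← mu_sub]
    exact mu_mem_unitVecs (c.step_unit i hi)
  pos_inj := by
    intro i hi j hj h
    exact c.pos_inj i hi j hj (mu_inj h)

lemma mirror_mirror {n : ℕ} (c : Config n) : mirror (mirror c) = c := by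
  refine Config.ext' ?_ ?_
  · funext j; show -(-c.st j) = c.st j; ring
  · funext j; exact mu_mu _

lemma dir_mirror {n : ℕ} (c : Config n) (i : ℕ) : dir (mirror c) i = mu (dir c i) := by
  show mu (c.pos (i + 1)) - mu (c.pos i) = mu (c.pos (i + 1) - c.pos i)
  rw [mu_sub]

lemma delta_mirror {n : ℕ} (c : Config n) (i : ℕ) (hst : c.st i ≠ 0) :
    delta (mirror c) i = mu (delta c i) := by
  have hms : (mirror c).st i = -c.st i := rfl
  rcases lt_or_gt_of_ne hst with hneg | hpos
  · rw [delta, delta, hms, if_pos (show (0 : ℤ) < -c.st i by omega),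
      if_neg (show ¬ (0 : ℤ) < c.st i by omega), dir_mirror, mu_rotInv_rotInv]
  · rw [delta, delta, hms, if_neg (show ¬ (0 : ℤ) < -c.st i by omega),
      if_pos hpos, dir_mirror, mu_rot_rot]

lemma stepAt_mirror {n : ℕ} {c c' : Config n} {i : ℕ} (h : StepAt c i c') :
    StepAt (mirror c) i (mirror c') := by
  obtain ⟨hin, hst, hsts, hposs⟩ := h
  refine ⟨hin, by show -c.st i ≠ 0; omega, ?_, ?_⟩
  · intro j hj
    show -c'.st j = nextSt (mirror c) i j
    rw [hsts j hj]
    have hms : ∀ k, (mirror c).st k = -c.st k := fun _ => rfl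
    unfold nextSt
    by_cases hji : j = i
    · subst hji
      rw [if_pos rfl, if_pos rfl, hms]
      rcases lt_or_gt_of_ne hst with hneg | hpos
      · rw [if_neg (by omega : ¬ (0 : ℤ) < c.st j), if_pos (by omega : (0 : ℤ) < -c.st j)]
        ring
      · rw [if_pos hpos, if_neg (by omega : ¬ (0 : ℤ) < -c.st j)]
        ring
    · rw [if_neg hji, if_neg hji, hms]
  · intro j hj
    show mu (c'.pos j) = nextPos (mirror c) i j
    rw [hposs j hj, nextPos, nextPos]
    split_ifs with hij
    · show mu (c.pos j + delta c i) = mu (c.pos j) + delta (mirror c) i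
      rw [mu_add, delta_mirror c i hst]
    · rfl

lemma step_mirror {n : ℕ} {c c' : Config n} (h : Step c c') : Step (mirror c) (mirror c') := by
  obtain ⟨i, hi⟩ := h
  exact ⟨i, stepAt_mirror hi⟩

lemma reachable_mirror {n : ℕ} {c c' : Config n} (h : Reachable c c') :
    Reachable (mirror c) (mirror c') := by
  induction h with
  | refl => exact Relation.ReflTransGen.refl
  | tail _ hstep ih => exact Relation.ReflTransGen.tail ih (step_mirror hstep)

lemma applicable_of_mirror {n : ℕ} {c : Config n} {i : ℕ} (h : Applicable (mirror c) i) :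
    Applicable c i := by
  obtain ⟨c'', h⟩ := h
  have := stepAt_mirror h
  rw [mirror_mirror] at this
  exact ⟨mirror c'', this⟩

lemma terminal_mirror {n : ℕ} {c : Config n} (h : Terminal c) : Terminal (mirror c) := by
  intro i hap
  exact h i (applicable_of_mirror hap)

lemma mirror_mkInit (n : ℕ) (s₀ : ℕ → ℤ) :
    mirror (mkInit n s₀) = mkInit n (fun i => -s₀ i) := by
  refine Config.ext' rfl ?_
  funext j
  show mu ((j : ℤ), (0 : ℤ)) = ((j : ℤ), (0 : ℤ))
  simp [mu]

lemma computes_mirror {n : ℕ} {c₀ ct : Config n} (h : Computes c₀ ct) :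
    Computes (mirror c₀) (mirror ct) := by
  obtain ⟨hfin, hres⟩ := h
  constructor
  · rintro ⟨f, hf0, hf⟩
    refine hfin ⟨fun k => mirror (f k), ?_, fun k => step_mirror (hf k)⟩
    show mirror (f 0) = c₀
    rw [hf0, mirror_mirror]
  · intro c hr ht i hi
    have hr' : Reachable c₀ (mirror c) := by
      have := reachable_mirror hr
      rwa [mirror_mirror] at this
    obtain ⟨h1, h2⟩ := hres (mirror c) hr' (terminal_mirror ht) i hi
    constructor
    · show c.st i = -ct.st i
      have : -c.st i = ct.st i := h1
      omega
    · show c.pos i = mu (ct.pos i)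
      have : mu (c.pos i) = ct.pos i := h2
      rw [← this, mu_mu]

lemma neg_to_pos {n : ℕ} {p : ℕ → Pt} (hn : NegZigZag n p) :
    PosZigZag n (fun i => mu (p i)) := by
  constructor
  · intro i hi j hj hij
    exact hn.1 i hi j hj (mu_inj hij)
  · intro i hi
    show mu (p (i + 1)) - mu (p i) ∈ _
    rw [← mu_sub]
    have := hn.2 i hi
    simp only [Set.mem_insert_iff, Set.mem_singleton_iff] at this ⊢
    rcases this with h | h | h | h <;> rw [h] <;> simp [mu]
/-- Every positive or negative zig-zag path `p₀, …, p_{n-1}` is foldable by a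
Turning Machine: suitable initial states make the machine compute the target configuration
with `pos m_i = p_i - p₀` and all states `0`. -/
theorem zigzag_foldable (n : ℕ) (p : ℕ → Pt) (h : PosZigZag n p ∨ NegZigZag n p) :
    ∃ s₀ : ℕ → ℤ, ∃ ct : Config n, Computes (mkInit n s₀) ct ∧
      (∀ i < n, ct.st i = 0) ∧ ∀ i < n, ct.pos i = p i - p 0 := by
  rcases h with hp | hn
  · exact pos_foldable hp
  · obtain ⟨s₀, ct, hcomp, hst, hpos⟩ := pos_foldable (neg_to_pos hn)
    refine ⟨fun i => -s₀ i, mirror ct, ?_, ?_, ?_⟩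
    · have := computes_mirror hcomp
      rwa [mirror_mkInit] at this
    · intro i hi
      show -ct.st i = 0
      rw [hst i hi]; ring
    · intro i hi
      have h2 : ct.pos i = mu (p i) - mu (p 0) := hpos i hi
      show mu (ct.pos i) = p i - p 0
      rw [h2, ← mu_sub, mu_mu]

end TuringMachineFolding
end
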